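/- Let j be a positive integer with p² ∤ j, let v ≥ 0 be an integer, and set D = p^{2v}·j. Then for every integer n ≥ v there exists x ∈ M such that T_{n+1}(g_D) − (j/p)·T_n(g_D) = p^{n−v+1}·x; that is, T_{n+1}(g_D) − (j/p)·T_n(g_D) ≡ 0 modulo p^{n−v+1}·M. -/

import Mathlib

section helpers
variable {M : Type*} [AddCommGroup M]

private lemma zsum (r : ℤ) (t : Finset ℕ) (f : ℕ → M) :
    r • ∑ i ∈ t, f i = ∑ i ∈ t, r • f i := Finset.smul_sum

private lemma zadd (r : ℤ) (a b : M) : r • (a + b) = r • a + r • b := smul_add r a b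

private lemma zss (a b : ℤ) (x : M) : a • b • x = (a * b) • x := smul_smul a b x

private lemma zassemble (q : ℤ) (a b cc d : M) :
    a + q • b + (cc + q • d) = a + cc + q • (b + d) := by
  rw [smul_add]; abel

private lemma zkey (q e : ℤ) (i : ℕ) (x1 x2 x3 x4 : M) :
    q ^ i • (q • (x1 + q • x2) - e • (x3 + q • x4)) =
      q ^ i • (q • x1 - e • x3) + q • (q ^ i • (q • x2 - e • x4)) := by module

private lemma ztermsplit (q : ℤ) (i : ℕ) (x y : M) :
    q ^ i • (x + q • y) = q ^ i • x + q ^ (i + 1) • y := by module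

private lemma zsub (r : ℤ) (a b : M) : r • (a - b) = r • a - r • b := smul_sub r a b

private lemma zpp (q : ℤ) (i : ℕ) (x : M) : q • q ^ i • x = q ^ (i + 1) • x := by module

private lemma zP1 (q e : ℤ) (i : ℕ) (x z : M) :
    q • q ^ i • (q • x - e • z) = q ^ (i + 2) • x - e • q ^ (i + 1) • z := by module

private lemma zP2 (q e : ℤ) (i : ℕ) (x z : M) :
    q ^ 2 • q ^ i • (q • x - e • z) = q ^ (i + 3) • x - e • q ^ (i + 2) • z := by module

private lemma zfin (q : ℤ) (m : ℕ) (x y z : M) (hx : x = q ^ (m + 2) • y)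
    (hz : q • z = y) : x = q ^ (m + 3) • z := by
  rw [hx, ← hz]; module

end helpers

set_option maxRecDepth 8000

/-- Successive Hecke operators on Zagier's `g_D`: for `D = p^{2v}·j` with
`p² ∤ j` and `n ≥ v`, `T_{n+1}(g_D) − (j/p)·T_n(g_D) ≡ 0 mod p^{n−v+1}·M`. -/
theorem stmt_9 {p : ℕ} [Fact p.Prime] (hp : p ≠ 2)
    {M : Type*} [AddCommGroup M] [Module ℤ M]
    (g : ℕ → M) (T : M →ₗ[ℤ] M)
    (hT : ∀ D : ℕ, 0 < D →
      T (g D) = (if p ^ 2 ∣ D then g (D / p ^ 2) else 0)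
        + (legendreSym p (D : ℤ)) • g D + (p : ℤ) • g (p ^ 2 * D))
    (Tn : ℕ → M →ₗ[ℤ] M)
    (hTn0 : Tn 0 = LinearMap.id) (hTn1 : Tn 1 = T)
    (hTnrec : ∀ n : ℕ, Tn (n + 2) = T ∘ₗ Tn (n + 1) - (p : ℤ) • Tn n)
    (j v : ℕ) (hj : 0 < j) (hjp : ¬ p ^ 2 ∣ j)
    (D : ℕ) (hD : D = p ^ (2 * v) * j)
    (n : ℕ) (hn : v ≤ n) :
    ∃ x : M, Tn (n + 1) (g D) - (legendreSym p (j : ℤ)) • Tn n (g D)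
      = ((p : ℤ) ^ (n - v + 1)) • x := by
  subst hD
  have hpprime : p.Prime := Fact.out
  have hppos : 0 < p := hpprime.pos
  set ε : ℤ := legendreSym p (j : ℤ) with hεdef
  set h : ℕ → M := fun k => g (p ^ (2 * k) * j) with hhdef
  set A : ℕ → M := fun k => Tn k (h v) with hAdef
  -- T on h 0
  have hTh0 : T (h 0) = ε • h 0 + (p : ℤ) • h 1 := by
    have h0 : h 0 = g j := by simp [hhdef]
    have h1 : h 1 = g (p ^ 2 * j) := by norm_num [hhdef]
    rw [h0, h1, hT j hj, if_neg hjp, zero_add, hεdef]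
  -- T on h (k+1)
  have hThk : ∀ k : ℕ, T (h (k + 1)) = h k + (p : ℤ) • h (k + 2) := by
    intro k
    have hDpos : 0 < p ^ (2 * (k + 1)) * j := Nat.mul_pos (pow_pos hppos _) hj
    have hsplit : p ^ (2 * (k + 1)) * j = p ^ 2 * (p ^ (2 * k) * j) := by ring
    have hdvd : p ^ 2 ∣ p ^ (2 * (k + 1)) * j := ⟨p ^ (2 * k) * j, hsplit⟩
    have hdiv : (p ^ (2 * (k + 1)) * j) / p ^ 2 = p ^ (2 * k) * j := by
      rw [hsplit, Nat.mul_div_cancel_left _ (by positivity)]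
    have hleg : legendreSym p ((p ^ (2 * (k + 1)) * j : ℕ) : ℤ) = 0 := by
      rw [legendreSym.eq_zero_iff]
      have : ((p : ℤ)) ∣ ((p ^ (2 * (k + 1)) * j : ℕ) : ℤ) := by
        push_cast; exact Dvd.dvd.mul_right (dvd_pow_self _ (by omega)) _
      exact_mod_cast (ZMod.intCast_zmod_eq_zero_iff_dvd _ p).2 this
    have hmul : p ^ 2 * (p ^ (2 * (k + 1)) * j) = p ^ (2 * (k + 2)) * j := by ring
    show T (g (p ^ (2 * (k + 1)) * j)) = g (p ^ (2 * k) * j) + (p : ℤ) • g (p ^ (2 * (k + 2)) * j)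
    rw [hT _ hDpos, if_pos hdvd, hdiv, hleg, zero_smul, add_zero, hmul]
  have hTh1 : T (h 1) = h 0 + (p : ℤ) • h 2 := by
    simpa only [Nat.zero_add] using hThk 0
  have Arec : ∀ k : ℕ, A (k + 2) = T (A (k + 1)) - (p : ℤ) • A k := by
    intro k
    show Tn (k + 2) (h v) = T (Tn (k + 1) (h v)) - (p : ℤ) • Tn k (h v)
    rw [hTnrec k]
    simp [LinearMap.sub_apply, LinearMap.comp_apply, LinearMap.smul_apply]
  set c : ℕ → M := fun s => ∑ i ∈ Finset.range v,
      (p : ℤ) ^ i • ((p : ℤ) • h (s + (2 * i + 2)) - ε • h (s + (2 * i + 1))) with hcdef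
  set y : ℕ → M := fun s => h s + c s with hydef
  have key : ∀ s : ℕ, T (y (s + 1)) = y s + (p : ℤ) • y (s + 2) := by
    intro s
    have e1 : ∀ i : ℕ, s + 1 + (2 * i + 2) = (s + (2 * i + 2)) + 1 := fun i => by omega
    have e2 : ∀ i : ℕ, s + 1 + (2 * i + 1) = (s + (2 * i + 1)) + 1 := fun i => by omega
    have e3 : ∀ i : ℕ, s + (2 * i + 2) + 2 = s + 2 + (2 * i + 2) := fun i => by omega
    have e4 : ∀ i : ℕ, s + (2 * i + 1) + 2 = s + 2 + (2 * i + 1) := fun i => by omega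
    have hc : T (c (s + 1)) = c s + (p : ℤ) • c (s + 2) := by
      simp only [hcdef, map_sum, map_zsmul, map_sub, e1, e2, hThk, e3, e4, zkey, zsum,
        Finset.sum_add_distrib]
    simp only [hydef, map_add, hThk s, hc]
    exact zassemble _ _ _ _ _
  have free : ∀ m : ℕ,
      (∀ r, m + r = v → A m = ∑ i ∈ Finset.range (m + 1), (p : ℤ) ^ i • h (r + 2 * i)) ∧
      (∀ r, m + 1 + r = v →
        A (m + 1) = ∑ i ∈ Finset.range (m + 1 + 1), (p : ℤ) ^ i • h (r + 2 * i)) := by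
    intro m
    induction m with
    | zero =>
      constructor
      · intro r hr
        obtain rfl : r = v := by omega
        show Tn 0 (h r) = _
        rw [hTn0, Finset.sum_range_one]
        simp only [pow_zero, one_zsmul, Nat.mul_zero, Nat.add_zero]
        rfl
      · intro r hr
        obtain rfl : v = r + 1 := by omega
        show Tn 1 (h (r + 1)) = _
        rw [hTn1]
        rw [hThk r, Finset.sum_range_succ, Finset.sum_range_one]
        simp only [pow_zero, one_zsmul, pow_one, Nat.mul_zero, Nat.add_zero, Nat.mul_one]
    | succ m ih =>
      refine ⟨ih.2, ?_⟩
      intro r hr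
      have h1 := ih.2 (r + 1) (by omega)
      have h0 := ih.1 (r + 2) (by omega)
      have idx1 : ∀ i : ℕ, r + 1 + 2 * i = (r + 2 * i) + 1 := fun i => by omega
      simp only [idx1] at h1
      show A (m + 2) = ∑ i ∈ Finset.range (m + 1 + 1 + 1), (p : ℤ) ^ i • h (r + 2 * i)
      rw [Arec m, h1, h0, map_sum]
      simp only [map_zsmul, hThk, ztermsplit, Finset.sum_add_distrib, zsum, zpp]
      have idx2 : ∀ i : ℕ, r + 2 * i + 2 = r + 2 + 2 * i := fun i => by omega
      simp only [idx2]
      rw [Finset.sum_range_succ (fun i => (p : ℤ) ^ (i + 1) • h (r + 2 + 2 * i)) (m + 1),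
        Finset.sum_range_succ (fun i => (p : ℤ) ^ i • h (r + 2 * i)) (m + 1 + 1)]
      have idx3 : r + 2 + 2 * (m + 1) = r + 2 * (m + 1 + 1) := by omega
      have idx4 : m + 1 + 1 = m + 2 := rfl
      rw [idx3]
      abel
  have hAv : A v = h 0 + ∑ i ∈ Finset.range v, (p : ℤ) ^ (i + 1) • h (2 * i + 2) := by
    have := (free v).1 0 (by omega)
    rw [this, Finset.sum_range_succ']
    have idx : ∀ i : ℕ, 0 + 2 * (i + 1) = 2 * i + 2 := fun i => by omega
    simp only [idx, pow_zero, one_zsmul, Nat.mul_zero, Nat.add_zero]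
    exact add_comm _ _
  have hA1 : A (v + 1)
      = ε • h 0 + (p : ℤ) • h 1 + ∑ i ∈ Finset.range v, (p : ℤ) ^ (i + 2) • h (2 * i + 3) := by
    cases v with
    | zero =>
      show Tn 1 (h 0) = _
      rw [hTn1, hTh0, Finset.range_zero, Finset.sum_empty, add_zero]
    | succ w =>
      show A (w + 2) = _
      rw [Arec w, hAv, (free w).1 1 (by omega), map_add, map_sum, hTh0]
      have idx1 : ∀ i : ℕ, 2 * i + 2 = (2 * i + 1) + 1 := fun i => by omega
      simp only [idx1]
      simp only [map_zsmul]
      simp only [hThk]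
      simp only [ztermsplit]
      simp only [Finset.sum_add_distrib]
      simp only [zsum]
      simp only [zpp]
      have idx2 : ∀ i : ℕ, 1 + 2 * i = 2 * i + 1 := fun i => by omega
      have idx3 : ∀ i : ℕ, 2 * i + 1 + 1 + 1 = 2 * i + 3 := fun i => by omega
      have idx4 : ∀ i : ℕ, i + 1 + 1 = i + 2 := fun i => by omega
      simp only [idx2]
      simp only [idx3]
      simp only [idx4]
      abel
  have hA2 : A (v + 2) = (ε * ε) • h 0 + (ε * (p : ℤ)) • h 1 + ((p : ℤ) * p) • h 2
      + ∑ i ∈ Finset.range v, (p : ℤ) ^ (i + 3) • h (2 * i + 4) := by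
    rw [Arec v, hA1, hAv, map_add, map_add, map_sum, map_zsmul, map_zsmul, hTh0, hTh1]
    have idx1 : ∀ i : ℕ, 2 * i + 3 = (2 * i + 2) + 1 := fun i => by omega
    simp only [idx1, map_zsmul, hThk, ztermsplit, Finset.sum_add_distrib, zadd, zsum, zpp, zss]
    have idx2 : ∀ i : ℕ, 2 * i + 2 + 1 + 1 = 2 * i + 4 := fun i => by omega
    have idx3 : ∀ i : ℕ, 2 * i + 2 + 1 = 2 * i + 3 := fun i => by omega
    have idx4 : ∀ i : ℕ, i + 2 + 1 = i + 3 := fun i => by omega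
    have idx5 : ∀ i : ℕ, i + 1 + 1 = i + 2 := fun i => by omega
    have idx6 : ∀ i : ℕ, i + 1 + 2 = i + 3 := fun i => by omega
    try simp only [← pow_succ]
    try simp only [← pow_succ']
    try simp only [idx5]
    try simp only [idx4]
    try simp only [idx6]
    try simp only [idx2]
    try simp only [idx3]
    abel
  have P1 : A (v + 1) - ε • A v = (p : ℤ) • y 1 := by
    rw [hA1, hAv]
    simp only [hydef, hcdef]
    have j1 : ∀ i : ℕ, 1 + (2 * i + 2) = 2 * i + 3 := fun i => by omega
    have j2 : ∀ i : ℕ, 1 + (2 * i + 1) = 2 * i + 2 := fun i => by omega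
    try simp only [j1]
    try simp only [j2]
    simp only [zadd, zsum, zP1]
    try simp only [Finset.sum_sub_distrib]
    abel
  have P2 : A (v + 2) - ε • A (v + 1) = (p : ℤ) ^ 2 • y 2 := by
    rw [hA2, hA1]
    simp only [hydef, hcdef]
    have j1 : ∀ i : ℕ, 2 + (2 * i + 2) = 2 * i + 4 := fun i => by omega
    have j2 : ∀ i : ℕ, 2 + (2 * i + 1) = 2 * i + 3 := fun i => by omega
    try simp only [j1]
    try simp only [j2]
    simp only [zadd]
    simp only [zsum]
    simp only [zP2]
    simp only [zss]
    try simp only [Finset.sum_sub_distrib]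
    try simp only [pow_two]
    abel
  have claim : ∀ m : ℕ,
      (A (v + m + 1) - ε • A (v + m) = (p : ℤ) ^ (m + 1) • y (m + 1)) ∧
      (A (v + m + 2) - ε • A (v + m + 1) = (p : ℤ) ^ (m + 2) • y (m + 2)) := by
    intro m
    induction m with
    | zero =>
      constructor
      · show A (v + 1) - ε • A v = (p : ℤ) ^ 1 • y 1
        rw [pow_one]; exact P1
      · show A (v + 2) - ε • A (v + 1) = (p : ℤ) ^ 2 • y 2
        exact P2
    | succ m ih =>
      refine ⟨ih.2, ?_⟩
      show A (v + m + 3) - ε • A (v + m + 2) = (p : ℤ) ^ (m + 3) • y (m + 3)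
      have rec2 : A (v + m + 3) = T (A (v + m + 2)) - (p : ℤ) • A (v + m + 1) := Arec (v + m + 1)
      have rec1 : A (v + m + 2) = T (A (v + m + 1)) - (p : ℤ) • A (v + m) := Arec (v + m)
      have step : A (v + m + 3) - ε • A (v + m + 2)
          = T (A (v + m + 2) - ε • A (v + m + 1)) - (p : ℤ) • (A (v + m + 1) - ε • A (v + m)) := by
        rw [rec2, rec1]
        simp only [map_sub, map_zsmul, zsub, zss]
        simp only [mul_comm]
        abel
      rw [step, ih.1, ih.2]
      have k' : T (y (m + 2)) = y (m + 1) + (p : ℤ) • y (m + 3) := key (m + 1)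
      rw [map_zsmul, k']
      have j4 : m + 2 + 1 = m + 3 := by omega
      have j5 : m + 1 + 1 = m + 2 := by omega
      simp only [zadd]
      simp only [zss]
      try simp only [← pow_succ]
      try simp only [← pow_succ']
      try simp only [j4]
      try simp only [j5]
      abel
  obtain ⟨m, rfl⟩ := Nat.exists_eq_add_of_le hn
  refine ⟨y (m + 1), ?_⟩
  have e : v + m - v = m := by omega
  rw [e]
  exact (claim m).1
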